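/- The restriction map C[R_n]^{G_n} → C[L_n]^{W_n} is injective, i.e., a G_n-invariant polynomial on (gl_n(C))^m vanishing on the diagonal locus L_n vanishes identically. -/

import Mathlib

open MvPolynomial

/-- Evaluation of a polynomial function on `R_n = (gl_n ℂ)^m` at a tuple of matrices. -/
noncomputable def evalRep (m n : ℕ) (f : MvPolynomial (Fin m × Fin n × Fin n) ℂ)
    (x : Fin m → Matrix (Fin n) (Fin n) ℂ) : ℂ :=
  eval (fun p => x p.1 p.2.1 p.2.2) f

namespace Stmt6Aux

open Matrix Polynomial
open Fin.NatCast

noncomputable section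

/-- If an mv-polynomial vanishes along an affine line off a finite bad set,
it vanishes at the base point. -/
lemma line_trick {σ : Type*} (f : MvPolynomial σ ℂ) (a b : σ → ℂ)
    (bad : Set ℂ) (hbad : bad.Finite)
    (h : ∀ t : ℂ, t ∉ bad → MvPolynomial.eval (fun p => a p + b p * t) f = 0) :
    MvPolynomial.eval a f = 0 := by
  set g : σ → Polynomial ℂ := fun p => Polynomial.C (a p) + Polynomial.C (b p) * Polynomial.X
    with hg
  set q : Polynomial ℂ := MvPolynomial.aeval g f with hq
  have key : ∀ t : ℂ, q.eval t = MvPolynomial.eval (fun p => a p + b p * t) f := by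
    intro t
    have h1 : (Polynomial.aeval t : Polynomial ℂ →ₐ[ℂ] ℂ).comp (MvPolynomial.aeval g)
        = MvPolynomial.aeval (fun p => Polynomial.aeval t (g p)) := MvPolynomial.comp_aeval g (Polynomial.aeval t)
    have h2 : Polynomial.aeval t q = MvPolynomial.aeval (fun p => Polynomial.aeval t (g p)) f :=
      congrFun (congrArg (fun ψ => ψ.toFun) h1) f
    have h3 : (fun p => Polynomial.aeval t (g p)) = fun p => a p + b p * t := by
      funext p; simp [hg]
    have h4 : (MvPolynomial.aeval (fun p => a p + b p * t) : MvPolynomial σ ℂ →ₐ[ℂ] ℂ) f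
        = MvPolynomial.eval (fun p => a p + b p * t) f := by
      rw [MvPolynomial.aeval_def]
      rfl
    rw [← Polynomial.coe_aeval_eq_eval, ← h4, ← h3, h2]
  have hq0 : q = 0 := by
    apply Polynomial.eq_zero_of_infinite_isRoot
    apply Set.Infinite.mono (s := badᶜ)
    · intro t ht
      simp only [Set.mem_setOf_eq, Polynomial.IsRoot]
      rw [key t]
      exact h t ht
    · exact Set.Finite.infinite_compl hbad
  have := key 0
  rw [hq0] at this
  simp only [Polynomial.eval_zero] at this
  have h5 : (fun p => a p + b p * 0) = a := by funext p; ring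
  rw [h5] at this
  exact this.symm

variable {n : ℕ}

/-- The set of `t` for which `A + t • 1` is not invertible is finite. -/
lemma unit_pert (A : Matrix (Fin n) (Fin n) ℂ) : {t : ℂ | ¬ IsUnit (A + t • 1)}.Finite := by
  apply Set.Finite.subset (Polynomial.finite_setOf_isRoot
    (p := (-A).charpoly) (Matrix.charpoly_monic _).ne_zero)
  intro t ht
  simp only [Set.mem_setOf_eq] at ht ⊢
  have heval : ((-A).charpoly).eval t = (A + t • 1).det := by
    rw [Matrix.charpoly, ← Polynomial.coe_evalRingHom, RingHom.map_det]
    congr 1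
    ext i j
    by_cases h : i = j
    · subst h
      simp [Matrix.charmatrix_apply_eq, Matrix.add_apply, Matrix.smul_apply, Matrix.one_apply, add_comm]
    · simp [Matrix.charmatrix_apply_ne _ _ _ h, Matrix.add_apply, Matrix.smul_apply,
        Matrix.one_apply, h]
  have hdet : (A + t • 1).det = 0 := by
    by_contra hd
    exact ht ((Matrix.isUnit_iff_isUnit_det _).mpr (isUnit_iff_ne_zero.mpr hd))
  rw [Polynomial.IsRoot, heval, hdet]

lemma exists_triangular (n : ℕ) (B : Matrix (Fin n) (Fin n) ℂ) :
    ∃ P : (Matrix (Fin n) (Fin n) ℂ)ˣ, ∀ i j : Fin n, j < i →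
      ((P⁻¹ : (Matrix (Fin n) (Fin n) ℂ)ˣ).val * B * P.val) i j = 0 := by
  induction n with
  | zero => exact ⟨1, fun i => i.elim0⟩
  | succ n ih =>
    obtain ⟨μ, hμ⟩ := Module.End.exists_eigenvalue (Matrix.mulVecLin B)
    obtain ⟨v, hv⟩ := hμ.exists_hasEigenvector
    have hv0 : v ≠ 0 := hv.right
    have hBv : B *ᵥ v = μ • v := by
      have := hv.apply_eq_smul
      simpa [Matrix.mulVecLin_apply] using this
    obtain ⟨k, hk⟩ : ∃ k, v k ≠ 0 := by
      by_contra h; push_neg at h; exact hv0 (funext h)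
    set ek : Fin (n+1) → ℂ := Pi.single k 1 with hek
    set S : Matrix (Fin (n+1)) (Fin (n+1)) ℂ := (1 : Matrix _ _ ℂ).updateCol k v with hS
    have hdet : S.det = v k := by
      rw [hS, ← Matrix.cramer_apply, Matrix.cramer_one]
      rfl
    have hSu : IsUnit S := (Matrix.isUnit_iff_isUnit_det S).mpr
      (by rw [hdet]; exact isUnit_iff_ne_zero.mpr hk)
    set uS : (Matrix (Fin (n+1)) (Fin (n+1)) ℂ)ˣ := hSu.unit with huS
    have huSval : (uS : Matrix (Fin (n+1)) (Fin (n+1)) ℂ) = S := hSu.unit_spec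
    set A' : Matrix (Fin (n+1)) (Fin (n+1)) ℂ := (uS⁻¹).val * B * uS.val with hA'
    have hSe : S *ᵥ ek = v := by
      funext t
      rw [hek, Matrix.mulVec_single]
      simp [hS, Matrix.updateCol_self]
    have hcolv : A' *ᵥ ek = μ • ek := by
      have h1 : A' *ᵥ ek = (uS⁻¹).val *ᵥ (B *ᵥ (S *ᵥ ek)) := by
        rw [hA', huSval, ← Matrix.mulVec_mulVec, ← Matrix.mulVec_mulVec]
      rw [h1, hSe, hBv, Matrix.mulVec_smul, ← hSe, Matrix.mulVec_mulVec]
      have h2 : (uS⁻¹).val * S = 1 := by rw [← huSval]; exact uS.inv_mul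
      rw [h2, Matrix.one_mulVec]
    have hcol : ∀ i, A' i k = μ * ek i := by
      intro i
      have h3 := congrFun hcolv i
      rw [hek] at h3
      rw [Matrix.mulVec_single] at h3
      simpa [hek] using h3
    set σ : Equiv.Perm (Fin (n+1)) := Equiv.swap 0 k with hσp
    set T : Matrix (Fin (n+1)) (Fin (n+1)) ℂ := A'.submatrix σ σ with hT
    have hT0 : ∀ i : Fin (n+1), i ≠ 0 → T i 0 = 0 := by
      intro i hi
      have hσ0 : σ 0 = k := Equiv.swap_apply_left 0 k
      have h4 : T i 0 = A' (σ i) k := by rw [hT]; simp [Matrix.submatrix_apply, hσ0]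
      rw [h4, hcol]
      have hne : σ i ≠ k := by
        rw [← hσ0]; exact fun hc => hi (σ.injective hc)
      rw [hek, Pi.single_eq_of_ne hne]
      ring
    -- block decomposition
    set e : Fin 1 ⊕ Fin n ≃ Fin (n+1) := finSumFinEquiv.trans (finCongr (Nat.add_comm 1 n))
      with he
    have he1 : ∀ j : Fin 1, (e (Sum.inl j)).val = 0 := by
      intro j
      have : j = 0 := Subsingleton.elim _ _
      subst this
      rfl
    have he2 : ∀ j : Fin n, (e (Sum.inr j)).val = 1 + j.val := by intro j; rfl
    set C : Matrix (Fin n) (Fin n) ℂ :=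
      Matrix.of (fun i j => T (e (Sum.inr i)) (e (Sum.inr j))) with hC
    obtain ⟨Q, hQ⟩ := ih C
    set T₀ : Matrix (Fin 1 ⊕ Fin n) (Fin 1 ⊕ Fin n) ℂ := T.submatrix e e with hT₀
    set T11 := T₀.toBlocks₁₁ with hT11
    set T12 := T₀.toBlocks₁₂ with hT12
    have hTblocks : T₀ = Matrix.fromBlocks T11 T12 0 C := by
      rw [hT11, hT12]
      have h21 : T₀.toBlocks₂₁ = 0 := by
        apply Matrix.ext
        intro i j
        show T (e (Sum.inr i)) (e (Sum.inl j)) = 0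
        have hj0 : e (Sum.inl j) = 0 := Fin.ext (he1 j)
        rw [hj0]
        apply hT0
        intro hc
        have h8 := congrArg Fin.val hc
        rw [he2 i, Fin.val_zero] at h8
        omega
      have h22 : T₀.toBlocks₂₂ = C := by
        apply Matrix.ext
        intro i j
        rfl
      conv_lhs => rw [← Matrix.fromBlocks_toBlocks T₀]
      rw [h21, h22]
    set U₀ : Matrix (Fin 1 ⊕ Fin n) (Fin 1 ⊕ Fin n) ℂ :=
      Matrix.fromBlocks (1 : Matrix (Fin 1) (Fin 1) ℂ) 0 0 Q.val with hU₀
    set U₀i : Matrix (Fin 1 ⊕ Fin n) (Fin 1 ⊕ Fin n) ℂ :=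
      Matrix.fromBlocks (1 : Matrix (Fin 1) (Fin 1) ℂ) 0 0 (Q⁻¹).val with hU₀i
    set U : Matrix (Fin (n+1)) (Fin (n+1)) ℂ := U₀.submatrix e.symm e.symm with hU
    set Ui : Matrix (Fin (n+1)) (Fin (n+1)) ℂ := U₀i.submatrix e.symm e.symm with hUi
    have hUU : U * Ui = 1 := by
      rw [hU, hUi, Matrix.submatrix_mul_equiv U₀ U₀i _ e.symm _]
      have h5 : U₀ * U₀i = 1 := by
        rw [hU₀, hU₀i, Matrix.fromBlocks_multiply]
        simp only [Matrix.one_mul, Matrix.mul_one, Matrix.zero_mul, Matrix.mul_zero,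
          add_zero, zero_add, Units.mul_inv]
        exact Matrix.fromBlocks_one
      rw [h5, Matrix.submatrix_one_equiv]
    have hUiU : Ui * U = 1 := by
      rw [hU, hUi, Matrix.submatrix_mul_equiv U₀i U₀ _ e.symm _]
      have h6 : U₀i * U₀ = 1 := by
        rw [hU₀, hU₀i, Matrix.fromBlocks_multiply]
        simp only [Matrix.one_mul, Matrix.mul_one, Matrix.zero_mul, Matrix.mul_zero,
          add_zero, zero_add, Units.inv_mul]
        exact Matrix.fromBlocks_one
      rw [h6, Matrix.submatrix_one_equiv]
    set E : Matrix (Fin (n+1)) (Fin (n+1)) ℂ := (1 : Matrix _ _ ℂ).submatrix σ id with hE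
    set Ei : Matrix (Fin (n+1)) (Fin (n+1)) ℂ := (1 : Matrix _ _ ℂ).submatrix id σ with hEi
    have hEA : ∀ M : Matrix (Fin (n+1)) (Fin (n+1)) ℂ, E * M * Ei = M.submatrix σ σ := by
      intro M
      have h7 : E * M = M.submatrix σ id := by
        have := Matrix.submatrix_mul_equiv (1 : Matrix (Fin (n+1)) (Fin (n+1)) ℂ) M
          (⇑σ) (Equiv.refl (Fin (n+1))) id
        simpa [hE] using this
      rw [h7]
      have := Matrix.submatrix_mul_equiv M (1 : Matrix (Fin (n+1)) (Fin (n+1)) ℂ)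
        (⇑σ) (Equiv.refl (Fin (n+1))) (⇑σ)
      simpa [hEi] using this
    have hEEi : E * Ei = 1 := by
      have := hEA 1
      rw [Matrix.mul_one, Matrix.submatrix_one_equiv] at this
      exact this
    have hEiE : Ei * E = 1 := by
      have := Matrix.submatrix_mul_equiv (1 : Matrix (Fin (n+1)) (Fin (n+1)) ℂ)
        (1 : Matrix (Fin (n+1)) (Fin (n+1)) ℂ) id (σ : Equiv.Perm (Fin (n+1))) id
      rw [Matrix.one_mul, Matrix.submatrix_id_id] at this
      exact this
    set uE : (Matrix (Fin (n+1)) (Fin (n+1)) ℂ)ˣ := ⟨Ei, E, hEiE, hEEi⟩ with huE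
    set uU : (Matrix (Fin (n+1)) (Fin (n+1)) ℂ)ˣ := ⟨U, Ui, hUU, hUiU⟩ with huU
    refine ⟨uS * uE * uU, ?_⟩
    intro i j hji
    have hPv : ((uS * uE * uU : (Matrix (Fin (n+1)) (Fin (n+1)) ℂ)ˣ) :
        Matrix (Fin (n+1)) (Fin (n+1)) ℂ) = S * Ei * U := by
      rw [Units.val_mul, Units.val_mul, huSval]
    have hPiv : (((uS * uE * uU)⁻¹ : (Matrix (Fin (n+1)) (Fin (n+1)) ℂ)ˣ) :
        Matrix (Fin (n+1)) (Fin (n+1)) ℂ) = Ui * E * (uS⁻¹).val := by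
      have h9 : (uS * uE * uU)⁻¹ = uU⁻¹ * (uE⁻¹ * uS⁻¹) := by
        rw [_root_.mul_inv_rev, _root_.mul_inv_rev]
      rw [h9, Units.val_mul, Units.val_mul, ← Matrix.mul_assoc]
      rfl
    have hW : (((uS * uE * uU)⁻¹ : (Matrix (Fin (n+1)) (Fin (n+1)) ℂ)ˣ) :
          Matrix (Fin (n+1)) (Fin (n+1)) ℂ) * B *
          ((uS * uE * uU : (Matrix (Fin (n+1)) (Fin (n+1)) ℂ)ˣ) :
          Matrix (Fin (n+1)) (Fin (n+1)) ℂ)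
        = (U₀i * T₀ * U₀).submatrix e.symm e.symm := by
      rw [hPv, hPiv]
      have hblk : Ui * T * U = (U₀i * T₀ * U₀).submatrix e.symm e.symm := by
        have hTrw : T = T₀.submatrix e.symm e.symm := by
          rw [hT₀, Matrix.submatrix_submatrix]
          simp [Equiv.self_comp_symm]
        rw [hTrw, hU, hUi,
          Matrix.submatrix_mul_equiv U₀i T₀ _ e.symm _,
          Matrix.submatrix_mul_equiv (U₀i * T₀) U₀ _ e.symm _]
      rw [← hblk]
      have hconj : Ui * E * (uS⁻¹).val * B * (S * Ei * U)
          = Ui * (E * A' * Ei) * U := by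
        rw [hA', huSval]
        simp only [Matrix.mul_assoc]
      rw [hconj, hEA, ← hT]
    have hfinal : U₀i * T₀ * U₀ = Matrix.fromBlocks
        T11 (T12 * Q.val) 0 ((Q⁻¹).val * (C * Q.val)) := by
      rw [hTblocks, hU₀, hU₀i, Matrix.fromBlocks_multiply, Matrix.fromBlocks_multiply]
      simp only [Matrix.one_mul, Matrix.mul_one, Matrix.zero_mul, Matrix.mul_zero,
        add_zero, zero_add, Matrix.mul_assoc]
    rw [hW, hfinal, Matrix.submatrix_apply]
    rcases hsi : e.symm i with i0 | i1 <;> rcases hsj : e.symm j with j0 | j1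
    · exfalso
      have hieq : i = e (Sum.inl i0) := by rw [← hsi, e.apply_symm_apply]
      have hjeq : j = e (Sum.inl j0) := by rw [← hsj, e.apply_symm_apply]
      have h10 : i.val = 0 := by rw [hieq, he1]
      have h11 : j.val = 0 := by rw [hjeq, he1]
      have := (Fin.lt_def).mp hji
      omega
    · exfalso
      have hieq : i = e (Sum.inl i0) := by rw [← hsi, e.apply_symm_apply]
      have hjeq : j = e (Sum.inr j1) := by rw [← hsj, e.apply_symm_apply]
      have h10 : i.val = 0 := by rw [hieq, he1]
      have h11 : j.val = 1 + j1.val := by rw [hjeq, he2]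
      have := (Fin.lt_def).mp hji
      omega
    · simp [Matrix.fromBlocks_apply₂₁]
    · have hieq : i = e (Sum.inr i1) := by rw [← hsi, e.apply_symm_apply]
      have hjeq : j = e (Sum.inr j1) := by rw [← hsj, e.apply_symm_apply]
      have h10 : i.val = 1 + i1.val := by rw [hieq, he2]
      have h11 : j.val = 1 + j1.val := by rw [hjeq, he2]
      have h12 : j1 < i1 := by
        rw [Fin.lt_def]
        have := (Fin.lt_def).mp hji
        omega
      have h13 := hQ i1 j1 h12
      simp only [Matrix.fromBlocks_apply₂₂]
      rw [← Matrix.mul_assoc]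
      exact h13

lemma similar_diagonal (n : ℕ) (B : Matrix (Fin n) (Fin n) ℂ) (d : Fin n → ℂ)
    (hd : Function.Injective d)
    (hev : ∀ j, ∃ v, v ≠ 0 ∧ B *ᵥ v = d j • v) :
    ∃ P : (Matrix (Fin n) (Fin n) ℂ)ˣ, B = P.val * Matrix.diagonal d * (P⁻¹).val := by
  rcases Nat.eq_zero_or_pos n with h0 | hpos
  · subst h0
    exact ⟨1, by funext i j; exact i.elim0⟩
  · haveI : Nonempty (Fin n) := ⟨⟨0, hpos⟩⟩
    choose v hv0 hBv using hev
    set fl : Module.End ℂ (Fin n → ℂ) := Matrix.mulVecLin B with hfl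
    have hflv : ∀ j, fl (v j) = d j • v j := by
      intro j
      show Matrix.mulVecLin B (v j) = d j • v j
      rw [Matrix.mulVecLin_apply]
      exact hBv j
    have hli : LinearIndependent ℂ v := by
      apply Module.End.eigenvectors_linearIndependent' fl d hd v
      intro j
      exact ⟨Module.End.mem_eigenspace_iff.mpr (hflv j), hv0 j⟩
    have hcard : Fintype.card (Fin n) = Module.finrank ℂ (Fin n → ℂ) := by
      simp [Module.finrank_fin_fun]
    set b := basisOfLinearIndependentOfCardEqFinrank hli hcard with hb
    have hbv : ⇑b = v := coe_basisOfLinearIndependentOfCardEqFinrank hli hcard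
    set c := Pi.basisFun ℂ (Fin n) with hc
    have h1 : LinearMap.toMatrix b b fl = Matrix.diagonal d := by
      apply Matrix.ext
      intro i j
      rw [LinearMap.toMatrix_apply]
      have hbj : fl (b j) = d j • b j := by
        rw [show b j = v j from congrFun hbv j]; exact hflv j
      rw [hbj, LinearEquiv.map_smul, Module.Basis.repr_self]
      by_cases hij : i = j
      · subst hij; simp
      · simp [Matrix.diagonal_apply_ne _ hij, Finsupp.single_eq_of_ne hij]
    have h2 : LinearMap.toMatrix c c fl = B := by
      rw [hc, LinearMap.toMatrix_eq_toMatrix', hfl, ← Matrix.toLin'_apply',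
        LinearMap.toMatrix'_toLin']
    have key := basis_toMatrix_mul_linearMap_toMatrix_mul_basis_toMatrix c b c b fl
    rw [h1, h2] at key
    refine ⟨⟨c.toMatrix b, b.toMatrix c, Module.Basis.toMatrix_mul_toMatrix_flip c b,
      Module.Basis.toMatrix_mul_toMatrix_flip b c⟩, ?_⟩
    exact key.symm

lemma pert (n : ℕ) (B : Matrix (Fin n) (Fin n) ℂ) :
    ∃ Z : Matrix (Fin n) (Fin n) ℂ,
      {t : ℂ | ¬ ∃ (Q : (Matrix (Fin n) (Fin n) ℂ)ˣ) (w : Fin n → ℂ),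
        (∀ j, w j ≠ 0) ∧ B + t • Z = Q.val * Matrix.diagonal w * (Q⁻¹).val}.Finite := by
  obtain ⟨P, hP⟩ := exists_triangular n B
  set T := (P⁻¹).val * B * P.val with hTdef
  set ι : Fin n → ℂ := fun j => (j : ℕ) + 1 with hι
  have hιne : ∀ j, ι j ≠ 0 := fun j => Nat.cast_add_one_ne_zero j
  have hιinj : Function.Injective ι := by
    intro a b h
    rw [hι] at h
    have h2 : ((a : ℕ) : ℂ) = ((b : ℕ) : ℂ) := by
      simpa using h
    exact Fin.val_injective (Nat.cast_injective h2)
  refine ⟨P.val * Matrix.diagonal ι * (P⁻¹).val, ?_⟩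
  set bad : Set ℂ := (⋃ (p : Fin n × Fin n),
      {t : ℂ | p.1 ≠ p.2 ∧ T p.1 p.1 + t * ι p.1 = T p.2 p.2 + t * ι p.2}) ∪
      ⋃ (j : Fin n), {t : ℂ | T j j + t * ι j = 0} with hbad
  have hbadfin : bad.Finite := by
    apply Set.Finite.union
    · apply Set.finite_iUnion
      intro p
      by_cases hp : p.1 = p.2
      · apply Set.Finite.subset Set.finite_empty
        intro t ht
        exact absurd hp ht.1
      · apply Set.Finite.subset
          (Set.finite_singleton ((T p.2 p.2 - T p.1 p.1) / (ι p.1 - ι p.2)))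
        intro t ht
        obtain ⟨hne, heq⟩ := ht
        have hc : ι p.1 - ι p.2 ≠ 0 := sub_ne_zero.mpr (fun hcc => hp (hιinj hcc))
        simp only [Set.mem_singleton_iff]
        rw [eq_div_iff hc]
        linear_combination heq
    · apply Set.finite_iUnion
      intro j
      apply Set.Finite.subset (Set.finite_singleton (-(T j j) / ι j))
      intro t ht
      simp only [Set.mem_setOf_eq] at ht
      simp only [Set.mem_singleton_iff]
      rw [eq_div_iff (hιne j)]
      linear_combination ht
  apply Set.Finite.subset hbadfin
  intro t ht
  simp only [Set.mem_setOf_eq] at ht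
  by_contra hnotbad
  apply ht
  set w : Fin n → ℂ := fun j => T j j + t * ι j with hw
  have hwinj : Function.Injective w := by
    intro a b hab
    by_contra hne
    exact hnotbad (Set.mem_union_left _ (Set.mem_iUnion.mpr ⟨(a, b), ⟨hne, hab⟩⟩))
  have hwne : ∀ j, w j ≠ 0 := by
    intro j hj
    exact hnotbad (Set.mem_union_right _ (Set.mem_iUnion.mpr ⟨j, hj⟩))
  set Mt := T + t • Matrix.diagonal ι with hMt
  have hMtut : ∀ i j : Fin n, j < i → Mt i j = 0 := by
    intro i j hji
    rw [hMt]
    have h1 := hP i j hji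
    simp [Matrix.add_apply, Matrix.smul_apply, h1,
      Matrix.diagonal_apply_ne ι (ne_of_gt hji)]
  have hdiagMt : ∀ j, Mt j j = w j := by
    intro j
    rw [hMt, hw]
    simp [Matrix.add_apply, Matrix.smul_apply, Matrix.diagonal_apply_eq, mul_comm]
  have hev : ∀ j, ∃ v, v ≠ 0 ∧ Mt *ᵥ v = w j • v := by
    intro j
    set N := Mt - w j • (1 : Matrix (Fin n) (Fin n) ℂ) with hN
    have hNut : Matrix.BlockTriangular N id := by
      intro a b hab
      have hab' : b < a := hab
      rw [hN]
      simp only [Matrix.sub_apply, Matrix.smul_apply, Matrix.one_apply, smul_eq_mul]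
      rw [hMtut a b hab', if_neg (Ne.symm (ne_of_lt hab'))]
      simp
    have hNdet : N.det = 0 := by
      rw [Matrix.det_of_upperTriangular hNut]
      apply Finset.prod_eq_zero (Finset.mem_univ j)
      rw [hN]
      simp [Matrix.sub_apply, Matrix.smul_apply, Matrix.one_apply_eq, hdiagMt j]
    obtain ⟨v, hv0, hv⟩ := (Matrix.exists_mulVec_eq_zero_iff).mpr hNdet
    refine ⟨v, hv0, ?_⟩
    rw [hN, Matrix.sub_mulVec, Matrix.smul_mulVec, Matrix.one_mulVec] at hv
    exact sub_eq_zero.mp hv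
  obtain ⟨Q0, hQ0⟩ := similar_diagonal n Mt w hwinj hev
  refine ⟨P * Q0, w, hwne, ?_⟩
  have h1 : P.val * (P⁻¹).val = 1 := Units.mul_inv P
  have hBPT : B = P.val * T * (P⁻¹).val := by
    rw [hTdef]
    calc B = 1 * B * 1 := by rw [Matrix.one_mul, Matrix.mul_one]
    _ = (P.val * (P⁻¹).val) * B * (P.val * (P⁻¹).val) := by rw [h1]
    _ = P.val * ((P⁻¹).val * B * P.val) * (P⁻¹).val := by
        simp only [Matrix.mul_assoc]
  have hZexp : B + t • (P.val * Matrix.diagonal ι * (P⁻¹).val)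
      = P.val * Mt * (P⁻¹).val := by
    rw [hMt]
    conv_lhs => rw [hBPT]
    rw [Matrix.mul_add, Matrix.add_mul]
    congr 1
    rw [Matrix.mul_smul, Matrix.smul_mul]
  rw [hZexp, hQ0]
  rw [Units.val_mul, _root_.mul_inv_rev, Units.val_mul]
  simp only [Matrix.mul_assoc]

/-- Iterated product `u_{k-1} ⋯ u_1 u_0` of a cyclic family of units. -/
def puAux {m n : ℕ} [NeZero m] (u : Fin m → (Matrix (Fin n) (Fin n) ℂ)ˣ) :
    ℕ → (Matrix (Fin n) (Fin n) ℂ)ˣ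
  | 0 => 1
  | (k+1) => u ((k : ℕ) : Fin m) * puAux u k

lemma puAux_congr {m n : ℕ} [NeZero m] (u u' : Fin m → (Matrix (Fin n) (Fin n) ℂ)ˣ)
    (h : ∀ i : Fin m, i ≠ 0 → u i = u' i) :
    ∀ k, 1 ≤ k → k ≤ m → puAux u k = puAux u' k * (u' 0)⁻¹ * (u 0) := by
  intro k
  induction k with
  | zero => omega
  | succ k ih =>
    intro h1 h2
    rcases Nat.eq_zero_or_pos k with rfl | hk
    · show u ((0 : ℕ) : Fin m) * puAux u 0 = u' ((0 : ℕ) : Fin m) * puAux u' 0 * (u' 0)⁻¹ * u 0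
      rw [show ((0 : ℕ) : Fin m) = 0 from Nat.cast_zero]
      show u 0 * 1 = u' 0 * 1 * (u' 0)⁻¹ * u 0
      group
    · have hkm : k < m := by omega
      have hcast : ((k : ℕ) : Fin m) ≠ 0 := by
        intro hc
        have hval := congrArg Fin.val hc
        rw [Fin.val_cast_of_lt hkm, Fin.val_zero] at hval
        omega
      show u ((k : ℕ) : Fin m) * puAux u k
        = u' ((k : ℕ) : Fin m) * puAux u' k * (u' 0)⁻¹ * u 0
      rw [ih hk (by omega), h _ hcast]
      group

/-- Cocycle used to conjugate a tuple of diagonal matrices to a constant tuple. -/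
def cAux {m n : ℕ} [NeZero m] (z : Fin m → Fin n → ℂ) (b : Fin n → ℂ) : ℕ → Fin n → ℂ
  | 0 => fun _ => 1
  | (k+1) => fun j => b j * cAux z b k j / z ((k : ℕ) : Fin m) j

lemma cAux_ne {m n : ℕ} [NeZero m] (z : Fin m → Fin n → ℂ) (b : Fin n → ℂ)
    (hz : ∀ i j, z i j ≠ 0) (hb : ∀ j, b j ≠ 0) : ∀ k j, cAux z b k j ≠ 0 := by
  intro k
  induction k with
  | zero => intro j; exact one_ne_zero
  | succ k ih =>
    intro j
    exact div_ne_zero (mul_ne_zero (hb j) (ih j)) (hz _ j)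

lemma cAux_prod {m n : ℕ} [NeZero m] (z : Fin m → Fin n → ℂ) (b : Fin n → ℂ)
    (hz : ∀ i j, z i j ≠ 0) :
    ∀ k j, cAux z b k j * ∏ l ∈ Finset.range k, z ((l : ℕ) : Fin m) j = b j ^ k := by
  intro k
  induction k with
  | zero => intro j; simp [cAux]
  | succ k ih =>
    intro j
    rw [Finset.prod_range_succ]
    show (b j * cAux z b k j / z ((k : ℕ) : Fin m) j) *
      ((∏ l ∈ Finset.range k, z ((l : ℕ) : Fin m) j) * z ((k : ℕ) : Fin m) j) = b j ^ (k+1)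
    calc (b j * cAux z b k j / z ((k : ℕ) : Fin m) j) *
        ((∏ l ∈ Finset.range k, z ((l : ℕ) : Fin m) j) * z ((k : ℕ) : Fin m) j)
        = b j * (cAux z b k j * ∏ l ∈ Finset.range k, z ((l : ℕ) : Fin m) j) *
          (z ((k : ℕ) : Fin m) j / z ((k : ℕ) : Fin m) j) := by ring
    _ = b j * b j ^ k * 1 := by rw [ih j, div_self (hz _ _)]
    _ = b j ^ (k+1) := by ring

lemma fin_add_one_val {m : ℕ} [NeZero m] (i : Fin m) :
    ((i + 1 : Fin m)).val = (i.val + 1) % m := by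
  rw [Fin.add_def, Fin.val_one']
  conv_rhs => rw [Nat.add_mod, Nat.mod_eq_of_lt i.isLt]

section Main

variable (m n : ℕ) [NeZero m] (f : MvPolynomial (Fin m × Fin n × Fin n) ℂ)

/-- Step 1: invariance kills all tuples of invertible diagonal matrices. -/
lemma step1
    (hinv : ∀ (g : Fin m → (Matrix (Fin n) (Fin n) ℂ)ˣ)
        (x : Fin m → Matrix (Fin n) (Fin n) ℂ),
      evalRep m n f (fun i => (g (i + 1))⁻¹.val * x i * (g i).val) = evalRep m n f x)
    (hvan : ∀ z : Fin n → ℂ, evalRep m n f (fun _ => Matrix.diagonal z) = 0)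
    (z : Fin m → Fin n → ℂ) (hz : ∀ i j, z i j ≠ 0) :
    evalRep m n f (fun i => Matrix.diagonal (z i)) = 0 := by
  have hm : 0 < m := Nat.pos_of_ne_zero (NeZero.ne m)
  obtain ⟨b, hb⟩ : ∃ b : Fin n → ℂ, ∀ j, b j ^ m = ∏ i, z i j := by
    choose b hb using fun j => IsAlgClosed.exists_pow_nat_eq (∏ i, z i j) hm
    exact ⟨b, hb⟩
  have hbne : ∀ j, b j ≠ 0 := by
    intro j h0
    have h1 := hb j
    rw [h0, zero_pow (NeZero.ne m)] at h1
    exact (Finset.prod_ne_zero_iff.mpr (fun i _ => hz i j)) h1.symm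
  set c := cAux z b with hc
  have hcne : ∀ k j, c k j ≠ 0 := cAux_ne z b hz hbne
  have hcm : ∀ j, c m j = 1 := by
    intro j
    have h1 := cAux_prod z b hz m j
    have h2 : ∏ l ∈ Finset.range m, z ((l : ℕ) : Fin m) j = ∏ i, z i j := by
      rw [← Fin.prod_univ_eq_prod_range (fun l => z ((l : ℕ) : Fin m) j) m]
      apply Finset.prod_congr rfl
      intro i _
      rw [Fin.cast_val_eq_self]
    rw [h2, ← hb j] at h1
    exact mul_right_cancel₀ (pow_ne_zero _ (hbne j)) (by rw [h1, one_mul])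
  have hsucc : ∀ i : Fin m, c ((i + 1 : Fin m)).val = c (i.val + 1) := by
    intro i
    rcases Nat.lt_or_ge (i.val + 1) m with h | h
    · rw [fin_add_one_val, Nat.mod_eq_of_lt h]
    · have him : i.val + 1 = m := by have := i.isLt; omega
      rw [fin_add_one_val, him, Nat.mod_self]
      funext j
      rw [hcm j]
      rfl
  set g : Fin m → (Matrix (Fin n) (Fin n) ℂ)ˣ := fun i =>
    ⟨Matrix.diagonal (c i.val), Matrix.diagonal (fun j => (c i.val j)⁻¹),
      by rw [Matrix.diagonal_mul_diagonal]
         have : (fun j => c i.val j * (c i.val j)⁻¹) = fun _ => (1 : ℂ) := by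
           funext j; exact mul_inv_cancel₀ (hcne _ j)
         rw [this, Matrix.diagonal_one],
      by rw [Matrix.diagonal_mul_diagonal]
         have : (fun j => (c i.val j)⁻¹ * c i.val j) = fun _ => (1 : ℂ) := by
           funext j; exact inv_mul_cancel₀ (hcne _ j)
         rw [this, Matrix.diagonal_one]⟩ with hg
  have happ := hinv g (fun _ => Matrix.diagonal b)
  have ht : (fun i => ((g (i + 1))⁻¹).val * Matrix.diagonal b * (g i).val)
      = fun i => Matrix.diagonal (z i) := by
    funext i
    show Matrix.diagonal (fun j => (c ((i + 1 : Fin m)).val j)⁻¹) * Matrix.diagonal b *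
      Matrix.diagonal (c i.val) = Matrix.diagonal (z i)
    rw [hsucc i, Matrix.diagonal_mul_diagonal, Matrix.diagonal_mul_diagonal]
    have harg : (fun j => (c (i.val + 1) j)⁻¹ * b j * c i.val j) = z i := by
      funext j
      have hc1 : c (i.val + 1) j = b j * c i.val j / z ((i.val : ℕ) : Fin m) j := rfl
      rw [hc1, Fin.cast_val_eq_self]
      have hzz := hz i j
      have hcc := hcne i.val j
      have hbb := hbne j
      field_simp
    rw [harg]
  rw [ht] at happ
  rw [happ]
  exact hvan b

/-- Step 2: a tuple of invertible matrices whose cyclic product is conjugate-diagonal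
with invertible diagonal is killed. -/
lemma lemA
    (hinv : ∀ (g : Fin m → (Matrix (Fin n) (Fin n) ℂ)ˣ)
        (x : Fin m → Matrix (Fin n) (Fin n) ℂ),
      evalRep m n f (fun i => (g (i + 1))⁻¹.val * x i * (g i).val) = evalRep m n f x)
    (hvan : ∀ z : Fin n → ℂ, evalRep m n f (fun _ => Matrix.diagonal z) = 0)
    (x : Fin m → Matrix (Fin n) (Fin n) ℂ) (u : Fin m → (Matrix (Fin n) (Fin n) ℂ)ˣ)
    (hu : ∀ i, (u i).val = x i) (P : (Matrix (Fin n) (Fin n) ℂ)ˣ) (w : Fin n → ℂ)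
    (hw : ∀ j, w j ≠ 0)
    (hy : (puAux u m).val = P.val * Matrix.diagonal w * (P⁻¹).val) :
    evalRep m n f x = 0 := by
  have hm : 0 < m := Nat.pos_of_ne_zero (NeZero.ne m)
  set g : Fin m → (Matrix (Fin n) (Fin n) ℂ)ˣ := fun i => P⁻¹ * (puAux u i.val)⁻¹ with hg
  set z : Fin m → Fin n → ℂ := fun i j => if i.val = m - 1 then w j else 1 with hz
  have happ := hinv g (fun i => Matrix.diagonal (z i))
  have ht : (fun i => ((g (i + 1))⁻¹).val * Matrix.diagonal (z i) * (g i).val) = x := by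
    funext i
    by_cases h : i.val + 1 = m
    · have hcond : i.val = m - 1 := by omega
      have hzi : z i = w := by funext j; rw [hz]; simp [hcond]
      have hi1 : ((i + 1 : Fin m)).val = 0 := by
        rw [fin_add_one_val, h, Nat.mod_self]
      show ((g (i + 1))⁻¹).val * Matrix.diagonal (z i) * (g i).val = x i
      rw [hzi, hg]
      simp only [hi1]
      show (((P⁻¹ * (puAux u 0)⁻¹)⁻¹ : (Matrix (Fin n) (Fin n) ℂ)ˣ) :
          Matrix (Fin n) (Fin n) ℂ) * Matrix.diagonal w *
          ((P⁻¹ * (puAux u i.val)⁻¹ : (Matrix (Fin n) (Fin n) ℂ)ˣ) :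
          Matrix (Fin n) (Fin n) ℂ) = x i
      have h0 : (P⁻¹ * (puAux u 0)⁻¹)⁻¹ = P := by
        show (P⁻¹ * (1 : (Matrix (Fin n) (Fin n) ℂ)ˣ)⁻¹)⁻¹ = P
        group
      rw [h0, Units.val_mul]
      calc P.val * Matrix.diagonal w * ((P⁻¹).val * ((puAux u i.val)⁻¹).val)
          = (P.val * Matrix.diagonal w * (P⁻¹).val) * ((puAux u i.val)⁻¹).val := by
            simp only [Matrix.mul_assoc]
      _ = (puAux u m).val * ((puAux u i.val)⁻¹).val := by rw [hy]
      _ = ((puAux u m) * (puAux u i.val)⁻¹).val := by rw [Units.val_mul]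
      _ = x i := by
          have h2 : puAux u m = puAux u (i.val + 1) := by rw [h]
          rw [h2]
          show ((u ((i.val : ℕ) : Fin m) * puAux u i.val) * (puAux u i.val)⁻¹).val = x i
          rw [mul_inv_cancel_right, Fin.cast_val_eq_self]
          exact hu i
    · have hcond : ¬(i.val = m - 1) := by have := i.isLt; omega
      have hzi : z i = fun _ => (1 : ℂ) := by funext j; rw [hz]; simp [hcond]
      have hi1 : ((i + 1 : Fin m)).val = i.val + 1 := by
        rw [fin_add_one_val, Nat.mod_eq_of_lt (by have := i.isLt; omega)]
      show ((g (i + 1))⁻¹).val * Matrix.diagonal (z i) * (g i).val = x i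
      rw [hzi, Matrix.diagonal_one, Matrix.mul_one, hg]
      simp only [hi1]
      rw [← Units.val_mul]
      have hgoal : (P⁻¹ * (puAux u (i.val + 1))⁻¹)⁻¹ * (P⁻¹ * (puAux u i.val)⁻¹)
          = u ((i.val : ℕ) : Fin m) := by
        rw [show puAux u (i.val + 1) = u ((i.val : ℕ) : Fin m) * puAux u i.val from rfl]
        group
      rw [hgoal, Fin.cast_val_eq_self]
      exact hu i
  rw [ht] at happ
  rw [happ]
  exact step1 m n f hinv hvan z (by
    intro i j
    rw [hz]
    dsimp only
    split
    · exact hw j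
    · exact one_ne_zero)

/-- Step 3: any tuple of invertible matrices is killed. -/
lemma lemM2
    (hinv : ∀ (g : Fin m → (Matrix (Fin n) (Fin n) ℂ)ˣ)
        (x : Fin m → Matrix (Fin n) (Fin n) ℂ),
      evalRep m n f (fun i => (g (i + 1))⁻¹.val * x i * (g i).val) = evalRep m n f x)
    (hvan : ∀ z : Fin n → ℂ, evalRep m n f (fun _ => Matrix.diagonal z) = 0)
    (x : Fin m → Matrix (Fin n) (Fin n) ℂ) (u : Fin m → (Matrix (Fin n) (Fin n) ℂ)ˣ)
    (hu : ∀ i, (u i).val = x i) :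
    evalRep m n f x = 0 := by
  have hm : 0 < m := Nat.pos_of_ne_zero (NeZero.ne m)
  set B := (puAux u m).val with hB
  obtain ⟨Z, hZfin⟩ := pert n B
  set Z₀ := (u 0).val * ((puAux u m)⁻¹).val * Z with hZ₀
  show MvPolynomial.eval (fun p => x p.1 p.2.1 p.2.2) f = 0
  apply line_trick f _ (fun p => if p.1 = 0 then Z₀ p.2.1 p.2.2 else 0) _ hZfin
  intro t ht
  simp only [Set.mem_setOf_eq, not_not] at ht
  obtain ⟨Q, w, hw, hQ⟩ := ht
  set x' : Fin m → Matrix (Fin n) (Fin n) ℂ :=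
    fun i => if i = 0 then x 0 + t • Z₀ else x i with hx'
  have hfun : (fun p : Fin m × Fin n × Fin n =>
      x p.1 p.2.1 p.2.2 + (if p.1 = 0 then Z₀ p.2.1 p.2.2 else 0) * t)
      = fun p => x' p.1 p.2.1 p.2.2 := by
    funext p
    rw [hx']
    dsimp only
    by_cases hp : p.1 = 0
    · simp only [hp, if_pos]
      rw [Matrix.add_apply, Matrix.smul_apply, smul_eq_mul]
      ring
    · simp [hp]
  rw [hfun]
  show evalRep m n f x' = 0
  -- slot 0 is still invertible
  have hBtZ : IsUnit (B + t • Z) := by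
    rw [hQ]
    have hdw : IsUnit (Matrix.diagonal w) := by
      rw [Matrix.isUnit_iff_isUnit_det, Matrix.det_diagonal]
      exact isUnit_iff_ne_zero.mpr (Finset.prod_ne_zero_iff.mpr (fun j _ => hw j))
    exact ((Q.isUnit.mul hdw).mul (Q⁻¹).isUnit)
  have hsum : x 0 + t • Z₀ = (u 0).val * ((puAux u m)⁻¹).val * (B + t • Z) := by
    rw [Matrix.mul_add, Matrix.mul_smul]
    have h1 : (u 0).val * ((puAux u m)⁻¹).val * B = x 0 := by
      rw [hB, Matrix.mul_assoc, ← Units.val_mul, inv_mul_cancel, Units.val_one,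
        Matrix.mul_one]
      exact hu 0
    rw [h1, ← hZ₀]
  have hunit : IsUnit (x 0 + t • Z₀) := by
    rw [hsum]
    exact ((u 0).isUnit.mul ((puAux u m)⁻¹).isUnit).mul hBtZ
  set u' : Fin m → (Matrix (Fin n) (Fin n) ℂ)ˣ :=
    fun i => if h : i = 0 then hunit.unit else u i with hu'def
  have hu' : ∀ i, (u' i).val = x' i := by
    intro i
    rw [hu'def, hx']
    by_cases hp : i = 0
    · simp only [hp, dif_pos, if_pos]
      exact hunit.unit_spec
    · simp only [hp, dif_neg, if_neg, not_false_iff]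
      exact hu i
  have hcongr : puAux u' m = puAux u m * (u 0)⁻¹ * (u' 0) := by
    apply puAux_congr u' u _ m hm le_rfl
    intro i hi
    rw [hu'def]
    simp [hi]
  have hy' : (puAux u' m).val = Q.val * Matrix.diagonal w * (Q⁻¹).val := by
    rw [hcongr, Units.val_mul, Units.val_mul]
    have hu'0 : (u' 0).val = x 0 + t • Z₀ := by
      rw [hu'def]; simp only [dif_pos]; exact hunit.unit_spec
    rw [hu'0, hsum]
    calc (puAux u m).val * ((u 0)⁻¹).val *
        ((u 0).val * ((puAux u m)⁻¹).val * (B + t • Z))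
        = (puAux u m).val * (((u 0)⁻¹).val * (u 0).val) * ((puAux u m)⁻¹).val *
          (B + t • Z) := by simp only [Matrix.mul_assoc]
    _ = (puAux u m).val * ((puAux u m)⁻¹).val * (B + t • Z) := by
        rw [← Units.val_mul, inv_mul_cancel, Units.val_one, Matrix.mul_one]
    _ = B + t • Z := by
        rw [← Units.val_mul, mul_inv_cancel, Units.val_one, Matrix.one_mul]
    _ = Q.val * Matrix.diagonal w * (Q⁻¹).val := hQ
  exact lemA m n f hinv hvan x' u' hu' Q w hw hy'

end Main

end
end Stmt6Aux

/-- Injectivity of the Chevalley restriction map: a `G_n`-invariant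
polynomial function on `R_n = (gl_n ℂ)^m` (cyclic base-change action of `GL_n(ℂ)^m`)
which vanishes on the diagonal locus `L_n = {(diagonal z, …, diagonal z)}`
vanishes identically. -/
theorem stmt_6 (m n : ℕ) [NeZero m] (f : MvPolynomial (Fin m × Fin n × Fin n) ℂ)
    (hinv : ∀ (g : Fin m → (Matrix (Fin n) (Fin n) ℂ)ˣ)
        (x : Fin m → Matrix (Fin n) (Fin n) ℂ),
      evalRep m n f (fun i => (g (i + 1))⁻¹.val * x i * (g i).val) = evalRep m n f x)
    (hvan : ∀ z : Fin n → ℂ, evalRep m n f (fun _ => Matrix.diagonal z) = 0) :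
    ∀ x : Fin m → Matrix (Fin n) (Fin n) ℂ, evalRep m n f x = 0 := by
  intro x
  show MvPolynomial.eval (fun p => x p.1 p.2.1 p.2.2) f = 0
  apply Stmt6Aux.line_trick f _
    (fun p : Fin m × Fin n × Fin n => if p.2.1 = p.2.2 then 1 else 0)
    (⋃ i : Fin m, {t : ℂ | ¬ IsUnit (x i + t • (1 : Matrix (Fin n) (Fin n) ℂ))})
    (Set.finite_iUnion (fun i => Stmt6Aux.unit_pert (x i)))
  intro t ht
  set x' : Fin m → Matrix (Fin n) (Fin n) ℂ := fun i => x i + t • 1 with hx'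
  have hfun : (fun p : Fin m × Fin n × Fin n =>
      x p.1 p.2.1 p.2.2 + (if p.2.1 = p.2.2 then (1 : ℂ) else 0) * t)
      = fun p => x' p.1 p.2.1 p.2.2 := by
    funext p
    rw [hx']
    dsimp only
    rw [Matrix.add_apply, Matrix.smul_apply, Matrix.one_apply, smul_eq_mul]
    by_cases hp : p.2.1 = p.2.2 <;> simp [hp, mul_comm]
  rw [hfun]
  have hun : ∀ i, IsUnit (x' i) := by
    intro i
    by_contra hcon
    exact ht (Set.mem_iUnion.mpr ⟨i, hcon⟩)
  exact Stmt6Aux.lemM2 m n f hinv hvan x' (fun i => (hun i).unit)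
    (fun i => (hun i).unit_spec)
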